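/- arXiv:2207.00981 — 3 statements merged into one kernel-verified Lean document; each statement's English description precedes it below -/
import Mathlib

section
/- (Frobenius's formula) Let G be a finite group and C_1, …, C_r conjugacy classes of G. The number of r-tuples (g_1, …, g_r) ∈ C_1 × ⋯ × C_r with g_1 g_2 ⋯ g_r = 1 equals (|C_1| ⋯ |C_r| / |G|) · Σ_χ χ(C_1) ⋯ χ(C_r) / χ(1)^{r−2}, where the sum ranges over the irreducible complex characters χ of G and χ(C_i) denotes the value of χ on elements of C_i. -/
open CategoryTheory Module
open scoped Classical
set_option linter.unusedSectionVars false
set_option maxHeartbeats 1600000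

noncomputable section
namespace FrobAux
variable {G : Type} [Group G] [Fintype G]

def subRep (W : FDRep ℂ G) (p : Submodule ℂ W) (hp : ∀ (g : G), ∀ x ∈ p, W.ρ g x ∈ p) :
    Representation ℂ G p where
  toFun g := (W.ρ g).restrict (fun x hx => hp g x hx)
  map_one' := by ext x; simp [LinearMap.restrict_apply]
  map_mul' g h := by ext x; simp [LinearMap.restrict_apply, Module.End.mul_apply]

lemma char_add_of_isCompl (W : FDRep ℂ G) (p q : Submodule ℂ W)
    (hp : ∀ (g : G), ∀ x ∈ p, W.ρ g x ∈ p) (hq : ∀ (g : G), ∀ x ∈ q, W.ρ g x ∈ q)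
    (hc : IsCompl p q) (g : G) :
    W.character g = (FDRep.of (subRep W p hp)).character g
      + (FDRep.of (subRep W q hq)).character g := by
  have e := Submodule.prodEquivOfIsCompl p q hc
  have key : (Submodule.prodEquivOfIsCompl p q hc).symm.conj (W.ρ g)
      = LinearMap.prodMap ((W.ρ g).restrict (fun x hx => hp g x hx))
        ((W.ρ g).restrict (fun x hx => hq g x hx)) := by
    apply LinearMap.ext
    rintro ⟨x, y⟩
    apply (Submodule.prodEquivOfIsCompl p q hc).injective
    rw [LinearEquiv.conj_apply]
    simp only [LinearMap.comp_apply, LinearEquiv.coe_coe, LinearEquiv.apply_symm_apply]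
    simp [Submodule.coe_prodEquivOfIsCompl', LinearMap.restrict_apply, map_add]
  have := LinearMap.trace_conj' (W.ρ g) (Submodule.prodEquivOfIsCompl p q hc).symm
  rw [key] at this
  rw [LinearMap.trace_prodMap'] at this
  show LinearMap.trace ℂ W (W.ρ g) = _ + _
  rw [← this]
  rfl


lemma exists_invariant_compl (W : FDRep ℂ G) (p : Submodule ℂ W)
    (hp : ∀ (g : G), ∀ x ∈ p, W.ρ g x ∈ p) :
    ∃ q : Submodule ℂ W, IsCompl p q ∧ ∀ (g : G), ∀ x ∈ q, W.ρ g x ∈ q := by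
  obtain ⟨q0, hq0⟩ := Submodule.exists_isCompl p
  set π0 : (W : Type) →ₗ[ℂ] W := p.subtype ∘ₗ (p.linearProjOfIsCompl q0 hq0) with hπ0
  set π : (W : Type) →ₗ[ℂ] W :=
    (Fintype.card G : ℂ)⁻¹ • ∑ g : G, (W.ρ g) ∘ₗ π0 ∘ₗ (W.ρ g⁻¹) with hπ
  have hcard : (Fintype.card G : ℂ) ≠ 0 := by exact_mod_cast Fintype.card_ne_zero
  have hmem : ∀ x : W, π x ∈ p := by
    intro x
    rw [hπ]
    simp only [LinearMap.smul_apply, LinearMap.sum_apply, LinearMap.comp_apply]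
    exact p.smul_mem _ (Submodule.sum_mem _ fun g _ => hp g _ (Submodule.coe_mem _))
  have hfix : ∀ x ∈ p, π x = x := by
    intro x hx
    rw [hπ]
    simp only [LinearMap.smul_apply, LinearMap.sum_apply, LinearMap.comp_apply]
    have : ∀ g : G, (W.ρ g) (π0 ((W.ρ g⁻¹) x)) = x := by
      intro g
      have h1 : (W.ρ g⁻¹) x ∈ p := hp g⁻¹ x hx
      have h2 : π0 ((W.ρ g⁻¹) x) = (W.ρ g⁻¹) x := by
        rw [hπ0]
        simp only [LinearMap.comp_apply, Submodule.coe_subtype]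
        exact congrArg _ (Submodule.linearProjOfIsCompl_apply_left hq0 ⟨_, h1⟩)
      rw [h2, ← Module.End.mul_apply, ← map_mul, mul_inv_cancel, map_one, Module.End.one_apply]
    rw [Finset.sum_congr rfl fun g _ => this g, Finset.sum_const, Finset.card_univ,
      ← Nat.cast_smul_eq_nsmul ℂ, smul_smul, inv_mul_cancel₀ hcard, one_smul]
  have cancel : ∀ (a : G) (y : W), (W.ρ a⁻¹) ((W.ρ a) y) = y := by
    intro a y
    rw [← Module.End.mul_apply, ← map_mul, inv_mul_cancel, map_one, Module.End.one_apply]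
  have hequiv : ∀ (h : G) (x : W), π ((W.ρ h) x) = (W.ρ h) (π x) := by
    intro h x
    rw [hπ]
    simp only [LinearMap.smul_apply, LinearMap.sum_apply, LinearMap.comp_apply, map_smul, map_sum]
    congr 1
    rw [← Equiv.sum_comp (Equiv.mulLeft h) (fun g => (W.ρ g) (π0 ((W.ρ g⁻¹) ((W.ρ h) x))))]
    apply Finset.sum_congr rfl
    intro g _
    simp only [Equiv.coe_mulLeft]
    rw [mul_inv_rev, map_mul, map_mul, Module.End.mul_apply, Module.End.mul_apply, cancel h x]
  refine ⟨LinearMap.ker π, ⟨?_, ?_⟩, ?_⟩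
  · rw [Submodule.disjoint_def]
    intro x hxp hxk
    rw [LinearMap.mem_ker] at hxk
    rw [← hfix x hxp, hxk]
  · rw [codisjoint_iff_le_sup]
    intro x _
    refine Submodule.mem_sup.mpr ⟨π x, hmem x, x - π x, ?_, by abel⟩
    rw [LinearMap.mem_ker, map_sub, hfix (π x) (hmem x), sub_self]
  · intro g x hx
    rw [LinearMap.mem_ker] at hx ⊢
    rw [hequiv g x, hx, map_zero]


lemma simple_of_irred (W : FDRep ℂ G) (h0 : finrank ℂ W ≠ 0)
    (hirr : ∀ p : Submodule ℂ W, (∀ (g : G), ∀ x ∈ p, W.ρ g x ∈ p) → p = ⊥ ∨ p = ⊤) :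
    Simple W := by
  constructor
  intro Y f hm
  constructor
  · intro hiso hf0
    have h1 : (𝟙 W : W ⟶ W) = 0 := by
      have := IsIso.inv_hom_id f
      subst hf0
      simpa using this.symm
    have : ∀ x : (W : Type), x = 0 := by
      intro x
      have h2 := congrArg (fun (u : W ⟶ W) => u.hom x) h1
      calc x = (𝟙 W : W ⟶ W).hom x := rfl
        _ = (0 : W ⟶ W).hom x := h2
        _ = 0 := rfl
    have : Subsingleton (W : Type) := ⟨fun a b => by rw [this a, this b]⟩
    exact h0 (finrank_zero_of_subsingleton)
  · intro hf0
    have hcomm : ∀ g : G, (f.hom.hom.hom : (Y : Type) →ₗ[ℂ] W) ∘ₗ Y.ρ g = W.ρ g ∘ₗ f.hom.hom.hom := by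
      intro g
      have := f.comm g
      ext x
      exact congrArg (fun u => ModuleCat.Hom.hom u.hom x) this
    set fh : (Y : Type) →ₗ[ℂ] W := f.hom.hom.hom with hfh
    set K : Submodule ℂ Y := LinearMap.ker fh with hKdef
    have hK : ∀ (g : G), ∀ x ∈ K, Y.ρ g x ∈ K := by
      intro g x hx
      rw [hKdef, LinearMap.mem_ker] at hx ⊢
      have h2 : fh ((Y.ρ g) x) = W.ρ g (fh x) := LinearMap.congr_fun (hcomm g) x
      rw [h2, hx, map_zero]
    have hinj : Function.Injective fh := by
      rw [← LinearMap.ker_eq_bot]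
      let ι : FDRep.of (subRep Y K hK) ⟶ Y :=
        ⟨FGModuleCat.ofHom (K.subtype : (K : Type) →ₗ[ℂ] Y), fun g => by ext x; rfl⟩
      have hι : ι ≫ f = (0 : FDRep.of (subRep Y K hK) ⟶ Y) ≫ f := by
        rw [Limits.zero_comp]
        ext x
        show fh (K.subtype x) = 0
        simpa using x.2
      have hι0 : ι = 0 := by
        haveI := hm
        exact (cancel_mono f).mp hι
      rw [Submodule.eq_bot_iff]
      intro x hx
      have := congrArg (fun (u : FDRep.of (subRep Y K hK) ⟶ Y) => u.hom ⟨x, hx⟩) hι0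
      exact this
    have hR : ∀ (g : G), ∀ x ∈ LinearMap.range fh, W.ρ g x ∈ LinearMap.range fh := by
      rintro g x ⟨y, rfl⟩
      exact ⟨Y.ρ g y, (LinearMap.congr_fun (hcomm g) y : fh ((Y.ρ g) y) = W.ρ g (fh y))⟩
    have hsurj : Function.Surjective fh := by
      rcases hirr (LinearMap.range fh) hR with h | h
      · exfalso
        apply hf0
        have : fh = 0 := LinearMap.range_eq_bot.mp h
        ext x
        exact congrFun (congrArg DFunLike.coe this) x
      · exact LinearMap.range_eq_top.mp h
    set e := LinearEquiv.ofBijective fh ⟨hinj, hsurj⟩ with he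
    have heapp : ∀ y : (Y : Type), e y = fh y := fun y => rfl
    refine ⟨⟨⟨FGModuleCat.ofHom (e.symm : (W : Type) →ₗ[ℂ] Y), fun g => ?_⟩, ?_, ?_⟩⟩
    · ext x
      show e.symm (W.ρ g x) = Y.ρ g (e.symm x)
      apply hinj
      have h1 : fh (e.symm (W.ρ g x)) = W.ρ g x := by rw [← heapp, e.apply_symm_apply]
      have h2 : fh ((Y.ρ g) (e.symm x)) = W.ρ g (fh (e.symm x)) :=
        LinearMap.congr_fun (hcomm g) (e.symm x)
      rw [h1, h2, ← heapp, e.apply_symm_apply]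
    · ext x
      show e.symm (fh x) = x
      rw [← heapp, e.symm_apply_apply]
    · ext x
      show fh (e.symm x) = x
      rw [← heapp, e.apply_symm_apply]


lemma simple_char_one_ne_zero (X : FDRep ℂ G) [Simple X] : X.character 1 ≠ 0 := by
  rw [FDRep.char_one]
  have : finrank ℂ X ≠ 0 := by
    intro h
    have : Subsingleton (X : Type) := by
      have : FiniteDimensional ℂ X := by infer_instance
      exact (Module.finrank_zero_iff (R := ℂ) (M := (X : Type))).mp h
    have hsub : Subsingleton ((forget (FGModuleCat ℂ)).obj X.V) := this
    apply CategoryTheory.id_nonzero X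
    ext x
    exact @Subsingleton.elim _ hsub _ _
  exact_mod_cast this

/-- Schur: the class sum acts as a scalar; consequence for characters. -/
lemma classSum_char (X : FDRep ℂ G) [Simple X] (c : G) (h : G) :
    ∑ s : G, (if IsConj c s then X.character (s * h) else 0)
      = (Nat.card {x : G // IsConj c x} : ℂ) * X.character c / X.character 1 * X.character h := by
  set C : Finset G := Finset.univ.filter (fun s => IsConj c s) with hC
  have hconjC : ∀ (g s : G), s ∈ C → g * s * g⁻¹ ∈ C := by
    intro g s hs
    rw [hC, Finset.mem_filter] at hs ⊢
    obtain ⟨u, hu⟩ := isConj_iff.mp hs.2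
    exact ⟨Finset.mem_univ _, isConj_iff.mpr ⟨g * u, by rw [← hu]; group⟩⟩
  set T : (X : Type) →ₗ[ℂ] X := ∑ s ∈ C, X.ρ s with hT
  have hcomm : ∀ g : G, T ∘ₗ X.ρ g = X.ρ g ∘ₗ T := by
    intro g
    rw [← Module.End.mul_eq_comp, ← Module.End.mul_eq_comp, hT, Finset.sum_mul, Finset.mul_sum]
    simp only [← map_mul]
    apply Finset.sum_nbij' (fun s => g⁻¹ * s * g) (fun s => g * s * g⁻¹)
    · intro s hs; simpa [mul_assoc] using hconjC g⁻¹ s hs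
    · intro s hs; exact hconjC g s hs
    · intro s _; group
    · intro s _; group
    · intro s _
      congr 1
      group
  let φ : X ⟶ X := ⟨FGModuleCat.ofHom T, fun g => by ext x; exact LinearMap.congr_fun (hcomm g) x⟩
  have hdim : finrank ℂ (X ⟶ X) = 1 := by
    rw [FDRep.finrank_hom_simple_simple X X, if_pos ⟨Iso.refl X⟩]
  obtain ⟨μ, hμ⟩ := (finrank_eq_one_iff_of_nonzero' (𝟙 X) (id_nonzero X)).mp hdim φ
  have hhom : T = μ • LinearMap.id := by
    have := congrArg (fun (u : X ⟶ X) => u.hom.hom.hom) hμ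
    exact (this : _ = _).symm
  -- trace computations
  have key : ∀ b : G, ∑ s ∈ C, X.character (s * b) = μ * X.character b := by
    intro b
    have h1 : T ∘ₗ X.ρ b = ∑ s ∈ C, X.ρ (s * b) := by
      rw [hT, ← Module.End.mul_eq_comp, Finset.sum_mul]
      simp only [← map_mul]
    have h2 : LinearMap.trace ℂ X (T ∘ₗ X.ρ b) = ∑ s ∈ C, X.character (s * b) := by
      rw [h1, map_sum]
      rfl
    rw [← h2, hhom, ← Module.End.mul_eq_comp, smul_mul_assoc, map_smul,
      ← Module.End.one_eq_id, one_mul, smul_eq_mul]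
    rfl
  have hcct : ∑ s ∈ C, X.character s = (C.card : ℂ) * X.character c := by
    have hcc : ∀ s ∈ C, X.character s = X.character c := by
      intro s hs
      rw [hC, Finset.mem_filter] at hs
      obtain ⟨u, hu⟩ := isConj_iff.mp hs.2
      rw [← hu, FDRep.char_conj]
    rw [Finset.sum_congr rfl hcc, Finset.sum_const, nsmul_eq_mul]
  have hcard : (C.card : ℂ) = (Nat.card {x : G // IsConj c x} : ℂ) := by
    rw [Nat.card_eq_fintype_card, Fintype.card_subtype]
  have h3 : ∑ s ∈ C, X.character s = μ * X.character 1 := by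
    simpa only [mul_one] using key 1
  have hμval : μ = (Nat.card {x : G // IsConj c x} : ℂ) * X.character c / X.character 1 := by
    rw [eq_div_iff (simple_char_one_ne_zero X), ← hcard, ← h3, hcct]
  rw [← Finset.sum_filter, ← hC, key h, hμval]


lemma tupleSum_char (X : FDRep ℂ G) [Simple X] :
    ∀ (r : ℕ) (c : Fin r → G) (h : G),
    ∑ t : Fin r → G, (if ∀ i, IsConj (c i) (t i) then X.character ((List.ofFn t).prod * h) else 0)
      = (∏ i, (Nat.card {x : G // IsConj (c i) x} : ℂ) * X.character (c i) / X.character 1)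
          * X.character h := by
  intro r
  induction r with
  | zero =>
    intro c h
    rw [Fintype.sum_unique]
    simp
  | succ r IH =>
    intro c h
    rw [← Equiv.sum_comp (Fin.consEquiv (fun _ : Fin (r + 1) => G))
      (fun t => if ∀ i, IsConj (c i) (t i) then X.character ((List.ofFn t).prod * h) else 0),
      Fintype.sum_prod_type]
    have step1 : ∀ (a : G) (s : Fin r → G),
        (if ∀ i, IsConj (c i) ((Fin.consEquiv (fun _ : Fin (r+1) => G)) (a, s) i)
          then X.character ((List.ofFn ((Fin.consEquiv (fun _ : Fin (r+1) => G)) (a, s))).prod * h) else 0)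
        = if (∀ i, IsConj (c i.succ) (s i)) then
            (if IsConj (c 0) a then X.character (a * ((List.ofFn s).prod * h)) else 0) else 0 := by
      intro a s
      have hcond : (∀ i, IsConj (c i) ((Fin.cons a s : Fin (r+1) → G) i)) ↔
          ((∀ i : Fin r, IsConj (c i.succ) (s i)) ∧ IsConj (c 0) a) := by
        rw [Fin.forall_fin_succ]
        simp [Fin.cons_succ, Fin.cons_zero, and_comm]
      have hprod : (List.ofFn (Fin.cons a s : Fin (r+1) → G)).prod = a * (List.ofFn s).prod := by
        rw [List.ofFn_succ]
        simp [Fin.cons_succ, Fin.cons_zero]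
      show (if ∀ i, IsConj (c i) ((Fin.cons a s : Fin (r+1) → G) i) then
          X.character ((List.ofFn (Fin.cons a s : Fin (r+1) → G)).prod * h) else 0) = _
      rw [hprod]
      by_cases h1 : ∀ i : Fin r, IsConj (c i.succ) (s i)
      · by_cases h2 : IsConj (c 0) a
        · rw [if_pos (hcond.mpr ⟨h1, h2⟩), if_pos h1, if_pos h2, mul_assoc]
        · rw [if_neg (fun hc => h2 (hcond.mp hc).2), if_pos h1, if_neg h2]
      · rw [if_neg (fun hc => h1 (hcond.mp hc).1), if_neg h1]
    calc ∑ a : G, ∑ s : Fin r → G, _ = ∑ a : G, ∑ s : Fin r → G,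
        (if (∀ i, IsConj (c i.succ) (s i)) then
            (if IsConj (c 0) a then X.character (a * ((List.ofFn s).prod * h)) else 0) else 0) := by
          exact Finset.sum_congr rfl fun a _ => Finset.sum_congr rfl fun s _ => step1 a s
      _ = ∑ s : Fin r → G, ∑ a : G,
        (if (∀ i, IsConj (c i.succ) (s i)) then
            (if IsConj (c 0) a then X.character (a * ((List.ofFn s).prod * h)) else 0) else 0) :=
          Finset.sum_comm
      _ = ∑ s : Fin r → G, (if (∀ i, IsConj (c i.succ) (s i)) then
            ((Nat.card {x : G // IsConj (c 0) x} : ℂ) * X.character (c 0) / X.character 1)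
              * X.character ((List.ofFn s).prod * h) else 0) := by
          refine Finset.sum_congr rfl fun s _ => ?_
          by_cases h1 : ∀ i : Fin r, IsConj (c i.succ) (s i)
          · simp only [if_pos h1]
            exact classSum_char X (c 0) ((List.ofFn s).prod * h)
          · simp only [if_neg h1, Finset.sum_const_zero]
      _ = ((Nat.card {x : G // IsConj (c 0) x} : ℂ) * X.character (c 0) / X.character 1)
            * ∑ s : Fin r → G, (if (∀ i, IsConj (c i.succ) (s i)) then
              X.character ((List.ofFn s).prod * h) else 0) := by
          rw [Finset.mul_sum]
          exact Finset.sum_congr rfl fun s _ => by rw [mul_ite, mul_zero]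
      _ = (∏ i, (Nat.card {x : G // IsConj (c i) x} : ℂ) * X.character (c i) / X.character 1)
            * X.character h := by
          rw [IH (fun i => c i.succ) h, Fin.prod_univ_succ, mul_assoc]


lemma char_decomp {ι : Type} [Fintype ι] (V : ι → FDRep ℂ G)
    (hcomplete : ∀ W : FDRep ℂ G, Simple W → ∃ k, Nonempty (V k ≅ W)) :
    ∀ W : FDRep ℂ G, ∃ n : ι → ℕ, ∀ g : G,
      W.character g = ∑ k, (n k : ℂ) * (V k).character g := by
  suffices H : ∀ (N : ℕ) (W : FDRep ℂ G), finrank ℂ W = N → ∃ n : ι → ℕ, ∀ g : G,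
      W.character g = ∑ k, (n k : ℂ) * (V k).character g by
    intro W; exact H (finrank ℂ W) W rfl
  intro N
  induction N using Nat.strong_induction_on with
  | _ N IH =>
    intro W hN
    by_cases h0 : finrank ℂ W = 0
    · refine ⟨0, fun g => ?_⟩
      have hsub : Subsingleton (W : Type) := Module.finrank_zero_iff.mp h0
      have : W.ρ g = 0 := Subsingleton.elim _ _
      show LinearMap.trace ℂ W (W.ρ g) = _
      rw [this]
      simp
    · by_cases hirr : ∀ p : Submodule ℂ W, (∀ (g : G), ∀ x ∈ p, W.ρ g x ∈ p) → p = ⊥ ∨ p = ⊤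
      · haveI : Simple W := simple_of_irred W h0 hirr
        obtain ⟨k, ⟨e⟩⟩ := hcomplete W this
        refine ⟨fun l => if l = k then 1 else 0, fun g => ?_⟩
        rw [← FDRep.char_iso e]
        rw [Finset.sum_congr rfl (fun l _ => by
          rw [apply_ite (Nat.cast : ℕ → ℂ), Nat.cast_one, Nat.cast_zero, ite_mul, one_mul,
            zero_mul])]
        rw [Finset.sum_ite_eq' Finset.univ k fun l => (V l).character g,
          if_pos (Finset.mem_univ k)]
      · push_neg at hirr
        obtain ⟨p, hp, hpneq⟩ := hirr
        obtain ⟨q, hcq, hq⟩ := exists_invariant_compl W p hp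
        have hplt : finrank ℂ p < N := hN ▸ Submodule.finrank_lt hpneq.2
        have hqtop : q ≠ ⊤ := by
          intro h
          apply hpneq.1
          have := hcq.disjoint
          rw [h, disjoint_top] at this
          exact this
        have hqlt : finrank ℂ q < N := hN ▸ Submodule.finrank_lt hqtop
        obtain ⟨np, hnp⟩ := IH _ hplt (FDRep.of (subRep W p hp)) rfl
        obtain ⟨nq, hnq⟩ := IH _ hqlt (FDRep.of (subRep W q hq)) rfl
        refine ⟨fun k => np k + nq k, fun g => ?_⟩
        rw [char_add_of_isCompl W p q hp hq hcq g, hnp g, hnq g, ← Finset.sum_add_distrib]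
        exact Finset.sum_congr rfl fun k _ => by push_cast; ring


lemma reg_char_eval (x : G) :
    (FDRep.of (Representation.ofMulAction ℂ G G)).character x
      = if x = 1 then (Fintype.card G : ℂ) else 0 := by
  show LinearMap.trace ℂ (MonoidAlgebra ℂ G) (Representation.ofMulAction ℂ G G x) = _
  rw [show Representation.ofMulAction ℂ G G x = (MonoidAlgebra.coeffLinearEquiv ℂ).symm.conj
    (Finsupp.lmapDomain ℂ ℂ (x • ·)) from rfl, LinearMap.trace_conj']
  rw [LinearMap.trace_eq_matrix_trace ℂ (Finsupp.basisSingleOne (R := ℂ) (ι := G))]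
  rw [Matrix.trace]
  have : ∀ h : G, (LinearMap.toMatrix Finsupp.basisSingleOne Finsupp.basisSingleOne
      (Finsupp.lmapDomain ℂ ℂ (x • ·) : (G →₀ ℂ) →ₗ[ℂ] G →₀ ℂ)) h h = if x = 1 then 1 else 0 := by
    intro h
    rw [LinearMap.toMatrix_apply]
    simp only [Finsupp.coe_basisSingleOne, Finsupp.lmapDomain_apply, Finsupp.mapDomain_single, smul_eq_mul]
    rw [Finsupp.basisSingleOne_repr]
    show (Finsupp.single (x * h) (1 : ℂ)) h = _
    rw [Finsupp.single_apply]
    simp [mul_eq_right]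
  simp only [Matrix.diag_apply, this]
  simp [Finset.sum_ite_eq]


lemma column_identity {ι : Type} [Fintype ι] (V : ι → FDRep ℂ G)
    (hsimple : ∀ k, Simple (V k))
    (hdistinct : ∀ k l, Nonempty (V k ≅ V l) → k = l)
    (hcomplete : ∀ W : FDRep ℂ G, Simple W → ∃ k, Nonempty (V k ≅ W)) (x : G) :
    ∑ k, (V k).character 1 * (V k).character x
      = if x = 1 then (Fintype.card G : ℂ) else 0 := by
  haveI := fun k => hsimple k
  obtain ⟨n, hn⟩ := char_decomp V hcomplete (FDRep.of (Representation.ofMulAction ℂ G G))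
  have hcard : (Fintype.card G : ℂ) ≠ 0 := by exact_mod_cast Fintype.card_ne_zero
  letI : Fintype G := ‹Fintype G›
  letI : Invertible (Nat.card G : ℂ) := invertibleOfNonzero (by rwa [Nat.card_eq_fintype_card])
  have ortho : ∀ k l : ι, (Fintype.card G : ℂ)⁻¹ * ∑ g : G, (V k).character g * (V l).character g⁻¹
      = if k = l then 1 else 0 := by
    intro k l
    have := FDRep.char_orthonormal (k := ℂ) (G := G) (V k) (V l)
    rw [Nat.card_eq_fintype_card] at this
    have h2 : (Fintype.card G : ℂ)⁻¹ * ∑ g : G, (V k).character g * (V l).character g⁻¹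
        = if Nonempty (V k ≅ V l) then 1 else 0 := this
    rw [h2]
    by_cases hkl : k = l
    · subst hkl
      rw [if_pos ⟨Iso.refl _⟩, if_pos rfl]
    · rw [if_neg (fun hne => hkl (hdistinct k l hne)), if_neg hkl]
  -- n l = (V l).character 1
  have hnval : ∀ l : ι, (n l : ℂ) = (V l).character 1 := by
    intro l
    have e1 : (Fintype.card G : ℂ)⁻¹ * ∑ g : G,
        (FDRep.of (Representation.ofMulAction ℂ G G)).character g * (V l).character g⁻¹
        = (V l).character 1 := by
      rw [Finset.sum_congr rfl (fun g _ => by rw [reg_char_eval g, ite_mul, zero_mul])]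
      rw [Finset.sum_ite_eq' Finset.univ (1 : G) (fun g => (Fintype.card G : ℂ) * (V l).character g⁻¹),
        if_pos (Finset.mem_univ _), inv_one, ← mul_assoc, inv_mul_cancel₀ hcard, one_mul]
    have e2 : (Fintype.card G : ℂ)⁻¹ * ∑ g : G,
        (FDRep.of (Representation.ofMulAction ℂ G G)).character g * (V l).character g⁻¹
        = (n l : ℂ) := by
      calc (Fintype.card G : ℂ)⁻¹ * ∑ g : G,
            (FDRep.of (Representation.ofMulAction ℂ G G)).character g * (V l).character g⁻¹
          = (Fintype.card G : ℂ)⁻¹ * ∑ g : G, ∑ k,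
              (n k : ℂ) * ((V k).character g * (V l).character g⁻¹) := by
            congr 1
            refine Finset.sum_congr rfl fun g _ => ?_
            rw [hn g, Finset.sum_mul]
            exact Finset.sum_congr rfl fun k _ => by ring
        _ = ∑ k, (n k : ℂ) * ((Fintype.card G : ℂ)⁻¹
              * ∑ g : G, (V k).character g * (V l).character g⁻¹) := by
            rw [Finset.sum_comm, Finset.mul_sum]
            refine Finset.sum_congr rfl fun k _ => ?_
            rw [← Finset.mul_sum, ← mul_assoc, mul_comm ((Fintype.card G : ℂ)⁻¹) ((n k : ℂ)),
              mul_assoc]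
        _ = ∑ k, (n k : ℂ) * (if k = l then 1 else 0) :=
            Finset.sum_congr rfl fun k _ => by rw [ortho k l]
        _ = (n l : ℂ) := by simp [Finset.sum_ite_eq]
    rw [← e1, e2]
  rw [Finset.sum_congr rfl (fun k _ => by rw [← hnval k]), ← hn x, reg_char_eval x]

end FrobAux

open FrobAux

/-- **Frobenius's formula.**  For conjugacy classes `C_1, …, C_r` of a finite group `G`
(here `C_i` is the conjugacy class of `c i`), the number of tuples
`(g_1, …, g_r) ∈ C_1 × ⋯ × C_r` with `g_1 ⋯ g_r = 1` equals
`(|C_1| ⋯ |C_r| / |G|) ⋅ Σ_χ χ(C_1) ⋯ χ(C_r) / χ(1)^{r-2}`, the sum being over the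
irreducible complex characters of `G` (indexed by a complete family `V` of pairwise
non-isomorphic irreducible representations). -/
theorem frobenius_formula {G : Type} [Group G] [Fintype G] {r : ℕ} (c : Fin r → G)
    (ι : Type) [Fintype ι] (V : ι → FDRep ℂ G)
    (hsimple : ∀ k, Simple (V k))
    (hdistinct : ∀ k l, Nonempty (V k ≅ V l) → k = l)
    (hcomplete : ∀ W : FDRep ℂ G, Simple W → ∃ k, Nonempty (V k ≅ W)) :
    (Nat.card {t : Fin r → G //
        (∀ i, IsConj (c i) (t i)) ∧ (List.ofFn t).prod = 1} : ℂ) =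
      (∏ i, (Nat.card {x : G // IsConj (c i) x} : ℂ)) / (Fintype.card G : ℂ) *
        ∑ k, (∏ i, (V k).character (c i)) / ((V k).character 1) ^ ((r : ℤ) - 2) := by
  haveI := fun k => hsimple k
  have hcard : (Fintype.card G : ℂ) ≠ 0 := by exact_mod_cast Fintype.card_ne_zero
  have colid := column_identity V hsimple hdistinct hcomplete
  have hLHS : (Nat.card {t : Fin r → G //
        (∀ i, IsConj (c i) (t i)) ∧ (List.ofFn t).prod = 1} : ℂ)
      = ∑ t : Fin r → G,
          (if (∀ i, IsConj (c i) (t i)) ∧ (List.ofFn t).prod = 1 then (1 : ℂ) else 0) := by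
    rw [Nat.card_eq_fintype_card, Fintype.card_subtype, Finset.card_filter, Nat.cast_sum]
    exact Finset.sum_congr rfl fun t _ => by split <;> simp
  have step2 : ∀ t : Fin r → G,
      (if (∀ i, IsConj (c i) (t i)) ∧ (List.ofFn t).prod = 1 then (1 : ℂ) else 0)
      = ∑ k, (Fintype.card G : ℂ)⁻¹ * ((V k).character 1 *
          (if (∀ i, IsConj (c i) (t i)) then (V k).character ((List.ofFn t).prod * 1) else 0)) := by
    intro t
    by_cases hc1 : ∀ i, IsConj (c i) (t i)
    · simp only [if_pos hc1, mul_one]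
      rw [← Finset.mul_sum, colid ((List.ofFn t).prod)]
      by_cases hp : (List.ofFn t).prod = 1
      · rw [if_pos hp, if_pos ⟨hc1, hp⟩, inv_mul_cancel₀ hcard]
      · rw [if_neg hp, if_neg (fun hh => hp hh.2), mul_zero]
    · rw [if_neg (fun hh => hc1 hh.1),
        Finset.sum_congr rfl (fun k _ => by rw [if_neg hc1, mul_zero, mul_zero]),
        Finset.sum_const_zero]
  rw [hLHS, Finset.sum_congr rfl (fun t _ => step2 t), Finset.sum_comm]
  have step3 : ∀ k, ∑ t : Fin r → G, (Fintype.card G : ℂ)⁻¹ * ((V k).character 1 *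
      (if (∀ i, IsConj (c i) (t i)) then (V k).character ((List.ofFn t).prod * 1) else 0))
      = (Fintype.card G : ℂ)⁻¹ * ((V k).character 1 *
          ((∏ i, (Nat.card {x : G // IsConj (c i) x} : ℂ) * (V k).character (c i)
            / (V k).character 1) * (V k).character 1)) := by
    intro k
    rw [← Finset.mul_sum, ← Finset.mul_sum, tupleSum_char (V k) r c 1]
  rw [Finset.sum_congr rfl (fun k _ => step3 k), Finset.mul_sum]
  refine Finset.sum_congr rfl fun k _ => ?_
  have hd : (V k).character 1 ≠ 0 := simple_char_one_ne_zero (V k)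
  have hprod : (∏ i, (Nat.card {x : G // IsConj (c i) x} : ℂ) * (V k).character (c i)
      / (V k).character 1)
      = (∏ i, (Nat.card {x : G // IsConj (c i) x} : ℂ)) * (∏ i, (V k).character (c i))
        / ((V k).character 1) ^ r := by
    rw [Finset.prod_div_distrib, Finset.prod_mul_distrib, Finset.prod_const,
      Finset.card_univ, Fintype.card_fin]
  rw [hprod]
  have hzpow : ((V k).character 1) ^ ((r : ℤ) - 2)
      = ((V k).character 1) ^ r / ((V k).character 1) ^ 2 := by
    rw [zpow_sub₀ hd, zpow_natCast, zpow_two, sq]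
  rw [hzpow]
  have hpr : ((V k).character 1) ^ r ≠ 0 := pow_ne_zero _ hd
  field_simp

end
end

section
/- (Scott's theorem) Let G be a finite group generated by g_1, …, g_n with g_1 g_2 ⋯ g_n = 1, and let V be a finite-dimensional representation of G over a field K. Then Σ_{i=1}^{n} codim(V^{g_i}) ≥ codim(V^G) + codim((V*)^G), where V^{g} is the fixed subspace of g acting on V, V^G is the subspace of G-invariants, and V* is the dual representation. -/
open Module Submodule LinearMap

/-- finrank of a finite supremum is at most the sum of finranks. -/
lemma finrank_finset_sup_le_sum' {K M ι : Type*} [Field K] [AddCommGroup M] [Module K M]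
    [FiniteDimensional K M] (p : ι → Submodule K M) (s : Finset ι) :
    Module.finrank K ↥(s.sup p) ≤ ∑ i ∈ s, Module.finrank K ↥(p i) := by
  classical
  induction s using Finset.cons_induction with
  | empty => simp
  | cons a s ha ih =>
      rw [Finset.sup_cons, Finset.sum_cons]
      have h := Submodule.finrank_sup_add_finrank_inf_eq (p a) (s.sup p)
      omega

lemma finrank_iSup_le_sum' {K M ι : Type*} [Field K] [AddCommGroup M] [Module K M]
    [FiniteDimensional K M] [Fintype ι] (p : ι → Submodule K M) :
    Module.finrank K ↥(⨆ i, p i) ≤ ∑ i, Module.finrank K ↥(p i) := by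
  have := finrank_finset_sup_le_sum' p Finset.univ
  rwa [Finset.sup_univ_eq_iSup] at this

/-- **Scott's theorem.**  If a group `G` is generated by `g_1, …, g_n` with
`g_1 ⋯ g_n = 1` and `V` is a finite-dimensional representation of `G` over a field `K`,
then `Σ_i codim V^{g_i} ≥ codim V^G + codim (V*)^G`. -/
theorem scott_inequality {K : Type*} [Field K] {V : Type*} [AddCommGroup V] [Module K V]
    [FiniteDimensional K V] {G : Type*} [Group G] (ρ : Representation K G V)
    {n : ℕ} (g : Fin n → G)
    (hgen : Subgroup.closure (Set.range g) = ⊤)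
    (hprod : (List.ofFn g).prod = 1) :
    (Module.finrank K V - Module.finrank K ρ.invariants) +
      (Module.finrank K (Module.Dual K V) - Module.finrank K ρ.dual.invariants) ≤
    ∑ i, (Module.finrank K V -
      Module.finrank K (LinearMap.ker (ρ (g i) - (LinearMap.id : V →ₗ[K] V)))) := by
  classical
  set e : Fin n → (V →ₗ[K] V) := fun i => ρ (g i) - LinearMap.id with he
  -- partial products
  set q : ℕ → G := fun k => ((List.ofFn g).take k).prod with hqdef
  have hq0 : q 0 = 1 := by simp [hqdef]
  have hqn : q n = 1 := by
    have : (List.ofFn g).take n = List.ofFn g := by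
      apply List.take_of_length_le; simp
    simp [hqdef, this, hprod]
  have hqs : ∀ i : Fin n, q (i.val + 1) = q i.val * g i := by
    intro i
    have hlen : i.val < (List.ofFn g).length := by simp [i.isLt]
    have := List.prod_take_succ (List.ofFn g) i.val hlen
    simpa [hqdef] using this
  -- the maps
  set A : (Fin n → V) →ₗ[K] (Fin n → V) :=
    LinearMap.pi (fun i => (e i).comp (LinearMap.proj i)) with hA
  set B : (Fin n → V) →ₗ[K] V :=
    ∑ i : Fin n, (ρ (q i.val)).comp (LinearMap.proj i) with hB
  set T : (Fin n → V) →ₗ[K] V := B.comp A with hT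
  set D : V →ₗ[K] (Fin n → V) := LinearMap.pi e with hD
  have hApply : ∀ (w : Fin n → V) (i : Fin n), A w i = e i (w i) := by
    intro w i; simp [hA]
  have hBapply : ∀ (u : Fin n → V), B u = ∑ i : Fin n, ρ (q i.val) (u i) := by
    intro u; simp [hB]
  have hTapply : ∀ (w : Fin n → V), T w = ∑ i : Fin n, ρ (q i.val) (e i (w i)) := by
    intro w; rw [hT, LinearMap.comp_apply, hBapply]; simp [hApply]
  have hterm : ∀ (i : Fin n) (v : V), ρ (q i.val) (e i v) = ρ (q (i.val + 1)) v - ρ (q i.val) v := by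
    intro i v
    rw [hqs i, map_mul]
    simp [he, LinearMap.sub_apply, Module.End.mul_apply]
  -- T kills constant vectors
  have hTconst : ∀ v : V, T (fun _ => v) = 0 := by
    intro v
    rw [hTapply]
    have : ∀ i : Fin n, ρ (q i.val) (e i v) = ρ (q (i.val + 1)) v - ρ (q i.val) v :=
      fun i => hterm i v
    rw [Finset.sum_congr rfl (fun i _ => this i)]
    rw [Fin.sum_univ_eq_sum_range (fun k => ρ (q (k + 1)) v - ρ (q k) v)]
    rw [Finset.sum_range_sub (fun k => ρ (q k) v)]
    simp [hq0, hqn]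
  -- D v is in range A and killed by B
  have hDA : ∀ v : V, D v = A (fun _ => v) := by
    intro v; funext i; simp [hD, hApply]
  -- kernel of D is the invariants
  have hkerD : LinearMap.ker D = ρ.invariants := by
    ext v
    simp only [LinearMap.mem_ker, Representation.mem_invariants]
    constructor
    · intro h0 x
      have hfix : ∀ i : Fin n, ρ (g i) v = v := by
        intro i
        have : D v i = 0 := by rw [h0]; rfl
        have : e i v = 0 := by simpa [hD] using this
        have := sub_eq_zero.mp (by simpa [he, LinearMap.sub_apply] using this)
        simpa using this
      have hx : x ∈ Subgroup.closure (Set.range g) := by rw [hgen]; trivial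
      induction hx using Subgroup.closure_induction with
      | mem y hy => obtain ⟨i, rfl⟩ := hy; exact hfix i
      | one => simp
      | mul a b _ _ ha hb => rw [map_mul, Module.End.mul_apply, hb, ha]
      | inv a _ ha =>
          have := congrArg (ρ a⁻¹) ha.symm
          simpa [← Module.End.mul_apply, ← map_mul] using this
    · intro h
      funext i
      simp [hD, he, LinearMap.sub_apply, h (g i)]
  -- kernel of T.dualMap is contained in the dual invariants
  have hdualker : LinearMap.ker T.dualMap ≤ ρ.dual.invariants := by
    intro f hf
    have hf0 : ∀ w : Fin n → V, f (T w) = 0 := by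
      intro w
      have : T.dualMap f = 0 := hf
      have := congrFun (congrArg (fun (φ : Module.Dual K (Fin n → V)) => (φ : (Fin n → V) → K)) this) w
      simpa using this
    have hstep : ∀ (i : Fin n) (v : V), f (ρ (q i.val) (e i v)) = 0 := by
      intro i v
      have h1 := hf0 (Pi.single i v)
      rw [hTapply] at h1
      rw [Finset.sum_eq_single i] at h1
      · simpa using h1
      · intro j _ hj
        rw [Pi.single_eq_of_ne hj]
        simp
      · intro h; exact absurd (Finset.mem_univ i) h
    have hfix : ∀ k : ℕ, k ≤ n → ∀ v : V, f (ρ (q k) v) = f v := by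
      intro k
      induction k with
      | zero => intro _ v; simp [hq0]
      | succ m ih =>
          intro hm v
          have hmn : m < n := hm
          set i : Fin n := ⟨m, hmn⟩ with hi
          have h1 : q (m + 1) = q m * g i := hqs i
          rw [h1, map_mul, Module.End.mul_apply]
          have h2 : ρ (g i) v = e i v + v := by
            simp [he, LinearMap.sub_apply]
          rw [h2, map_add, map_add]
          rw [hstep i v]
          simpa using ih (le_of_lt hmn) v
    have hgi : ∀ (i : Fin n) (v : V), f (ρ (g i) v) = f v := by
      intro i v
      have h1 : f (ρ (q i.val) (ρ (g i) v)) = f (ρ (g i) v) := hfix i.val (le_of_lt i.isLt) _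
      have h2 : f (ρ (q (i.val + 1)) v) = f v := hfix (i.val + 1) i.isLt v
      rw [hqs i, map_mul, Module.End.mul_apply] at h2
      rw [← h1, h2]
    have hall : ∀ x : G, ∀ v : V, f (ρ x v) = f v := by
      intro x
      have hx : x ∈ Subgroup.closure (Set.range g) := by rw [hgen]; trivial
      induction hx using Subgroup.closure_induction with
      | mem y hy => obtain ⟨i, rfl⟩ := hy; exact hgi i
      | one => simp
      | mul a b _ _ ha hb => intro v; rw [map_mul, Module.End.mul_apply, ha, hb]
      | inv a _ ha =>
          intro v
          have := ha (ρ a⁻¹ v)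
          rw [← Module.End.mul_apply, ← map_mul, mul_inv_cancel, map_one] at this
          simpa using this.symm
    rw [Representation.mem_invariants]
    intro x
    ext v
    have : (ρ.dual x f) v = f (ρ x⁻¹ v) := rfl
    rw [this, hall x⁻¹ v]
  -- rank computations
  have hrankD : Module.finrank K V - Module.finrank K ρ.invariants
      = Module.finrank K (LinearMap.range D) := by
    have := LinearMap.finrank_range_add_finrank_ker D
    rw [hkerD] at this
    omega
  have hrankdual : Module.finrank K (Module.Dual K V) - Module.finrank K ρ.dual.invariants
      ≤ Module.finrank K (LinearMap.range T) := by
    have h1 := LinearMap.finrank_range_add_finrank_ker T.dualMap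
    have h2 := LinearMap.finrank_range_dualMap_eq_finrank_range T
    have h3 : Module.finrank K (LinearMap.ker T.dualMap) ≤ Module.finrank K ρ.dual.invariants :=
      Submodule.finrank_mono hdualker
    omega
  -- range D ≤ ker B ⊓ range A, via restriction of B to range A
  have hmain : Module.finrank K (LinearMap.range T) + Module.finrank K (LinearMap.range D)
      ≤ Module.finrank K (LinearMap.range A) := by
    set B' : LinearMap.range A →ₗ[K] V := B.domRestrict (LinearMap.range A) with hB'
    have hrange : LinearMap.range B' = LinearMap.range T := by
      rw [hB', LinearMap.range_domRestrict, hT, LinearMap.range_comp]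
    have hkerge : Module.finrank K (LinearMap.range D) ≤ Module.finrank K (LinearMap.ker B') := by
      have hsub : LinearMap.range D ≤
          Submodule.map (LinearMap.range A).subtype (LinearMap.ker B') := by
        rintro x ⟨v, rfl⟩
        have hxA : D v ∈ LinearMap.range A := ⟨fun _ => v, (hDA v).symm⟩
        refine ⟨⟨D v, hxA⟩, ?_, rfl⟩
        show B (D v) = 0
        rw [hDA v]
        exact hTconst v
      calc Module.finrank K (LinearMap.range D)
          ≤ Module.finrank K (Submodule.map (LinearMap.range A).subtype (LinearMap.ker B')) :=
            Submodule.finrank_mono hsub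
        _ = Module.finrank K (LinearMap.ker B') :=
            Submodule.finrank_map_subtype_eq _ _
    have := LinearMap.finrank_range_add_finrank_ker B'
    rw [hrange] at this
    omega
  -- range A has finrank at most the sum of the ranks of the e i
  have hrangeA : Module.finrank K (LinearMap.range A)
      ≤ ∑ i : Fin n, Module.finrank K (LinearMap.range (e i)) := by
    have hle : LinearMap.range A ≤
        ⨆ i : Fin n, Submodule.map (LinearMap.single K (fun _ : Fin n => V) i)
          (LinearMap.range (e i)) := by
      rintro x ⟨w, rfl⟩
      have hx : A w = ∑ i : Fin n, Pi.single i (e i (w i)) := by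
        have h1 : A w = fun i => e i (w i) := funext (hApply w)
        rw [h1, Finset.univ_sum_single]
      rw [hx]
      apply Submodule.sum_mem
      intro i _
      apply Submodule.mem_iSup_of_mem i
      exact ⟨e i (w i), ⟨w i, rfl⟩, rfl⟩
    calc Module.finrank K (LinearMap.range A)
        ≤ Module.finrank K ↥(⨆ i : Fin n, Submodule.map
            (LinearMap.single K (fun _ : Fin n => V) i) (LinearMap.range (e i))) :=
          Submodule.finrank_mono hle
      _ ≤ ∑ i : Fin n, Module.finrank K (Submodule.map
            (LinearMap.single K (fun _ : Fin n => V) i) (LinearMap.range (e i))) :=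
          finrank_iSup_le_sum' _
      _ ≤ ∑ i : Fin n, Module.finrank K (LinearMap.range (e i)) :=
          Finset.sum_le_sum (fun i _ => Submodule.finrank_map_le _ _)
  -- per-index rank-nullity
  have hper : ∀ i : Fin n, Module.finrank K V -
      Module.finrank K (LinearMap.ker (ρ (g i) - (LinearMap.id : V →ₗ[K] V)))
      = Module.finrank K (LinearMap.range (e i)) := by
    intro i
    have h1 := LinearMap.finrank_range_add_finrank_ker (e i)
    have hk : LinearMap.ker (ρ (g i) - (LinearMap.id : V →ₗ[K] V)) = LinearMap.ker (e i) := rfl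
    have hle : Module.finrank K (LinearMap.ker (e i)) ≤ Module.finrank K V :=
      Submodule.finrank_le _
    rw [hk]
    omega
  rw [Finset.sum_congr rfl (fun i _ => hper i)]
  omega
end

section
/- Let g_1, …, g_r ∈ Σ_4 with each g_i of order 2, g_1 ⋯ g_r = 1, and ⟨g_1, …, g_r⟩ = Σ_4. If k is the number of indices i for which g_i is a transposition, then k ≥ 4. -/
set_option maxRecDepth 10000

open Equiv

instance decIsSwapFin4 : DecidablePred (Equiv.Perm.IsSwap (α := Fin 4)) :=
  fun f => decidable_of_iff (∃ x y, x ≠ y ∧ f = Equiv.swap x y) Iff.rfl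

/-- The Klein four subgroup of `Σ₄`. -/
def kleinV4 : Subgroup (Perm (Fin 4)) where
  carrier := {x | x ^ 2 = 1 ∧ Perm.sign x = 1}
  one_mem' := by constructor <;> decide
  mul_mem' := by
    intro a b ha hb
    exact (by decide : ∀ a b : Perm (Fin 4), (a ^ 2 = 1 ∧ Perm.sign a = 1) →
      (b ^ 2 = 1 ∧ Perm.sign b = 1) → ((a * b) ^ 2 = 1 ∧ Perm.sign (a * b) = 1)) a b ha hb
  inv_mem' := by
    intro a ha
    exact (by decide : ∀ a : Perm (Fin 4), (a ^ 2 = 1 ∧ Perm.sign a = 1) →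
      (a⁻¹ ^ 2 = 1 ∧ Perm.sign a⁻¹ = 1)) a ha

lemma mem_kleinV4 (x : Perm (Fin 4)) : x ∈ kleinV4 ↔ x ^ 2 = 1 ∧ Perm.sign x = 1 := Iff.rfl

instance : DecidablePred (· ∈ kleinV4) :=
  fun x => decidable_of_iff (x ^ 2 = 1 ∧ Perm.sign x = 1) Iff.rfl

instance : kleinV4.Normal := by
  constructor
  intro n hn gg
  rw [mem_kleinV4] at hn ⊢
  exact (by decide : ∀ n gg : Perm (Fin 4), (n ^ 2 = 1 ∧ Perm.sign n = 1) →
    ((gg * n * gg⁻¹) ^ 2 = 1 ∧ Perm.sign (gg * n * gg⁻¹) = 1)) n gg hn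

lemma prod_filter_ne_one' {G : Type*} [Monoid G] [DecidableEq G] (l : List G) :
    (l.filter (fun x => !(x == 1))).prod = l.prod := by
  induction l with
  | nil => rfl
  | cons a t ih =>
    rcases eq_or_ne a 1 with h | h <;> simp [List.filter_cons, h, ih]

lemma card_subtype_eq_countP {r : ℕ} (P : Fin r → Prop) [DecidablePred P] :
    Nat.card {i // P i} = List.countP (fun i => decide (P i)) (List.finRange r) := by
  rw [Nat.card_eq_fintype_card, Fintype.card_subtype, List.countP_eq_length_filter]
  rfl

/-- If `g_1, …, g_r ∈ Σ_4` all have order `2`, satisfy `g_1 ⋯ g_r = 1` and generate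
`Σ_4`, then the number `k` of indices `i` for which `g_i` is a transposition is at
least `4`. -/
theorem number_of_transpositions_ge_four {r : ℕ} (g : Fin r → Equiv.Perm (Fin 4))
    (h2 : ∀ i, orderOf (g i) = 2) (hprod : (List.ofFn g).prod = 1)
    (hgen : Subgroup.closure (Set.range g) = ⊤) :
    4 ≤ Nat.card {i : Fin r // (g i).IsSwap} := by
  classical
  by_contra hlt
  push_neg at hlt
  set k := Nat.card {i : Fin r // (g i).IsSwap} with hk
  -- basic facts about each g i
  have hsq : ∀ i, (g i) ^ 2 = 1 := fun i => by rw [← h2 i]; exact pow_orderOf_eq_one _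
  have hne : ∀ i, g i ≠ 1 := by
    intro i h
    have := h2 i
    rw [h, orderOf_one] at this
    omega
  -- decidable facts
  have hd1 : ∀ x : Perm (Fin 4), x ^ 2 = 1 → x ≠ 1 → ¬x.IsSwap → Perm.sign x = 1 := by decide
  have hd2 : ∀ x : Perm (Fin 4), x.IsSwap → Perm.sign x = -1 := by decide
  have hd3 : ∀ x : Perm (Fin 4), x ^ 2 = 1 → x ≠ 1 →
      ((x ^ 2 = 1 ∧ Perm.sign x = 1) ↔ ¬x.IsSwap) := by decide
  -- k is even, via sign
  have hkcard : k = (Finset.univ.filter (fun i => (g i).IsSwap)).card := by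
    rw [hk, Nat.card_eq_fintype_card, Fintype.card_subtype]
  have hsign : (-1 : ℤˣ) ^ k = 1 := by
    have h1 : Perm.sign (List.ofFn g).prod = 1 := by rw [hprod, map_one]
    rw [map_list_prod, List.map_ofFn, List.prod_ofFn] at h1
    simp only [Function.comp_apply] at h1
    have h3 : ∀ i ∈ Finset.univ, Perm.sign (g i) =
        (if (g i).IsSwap then (-1 : ℤˣ) else 1) := by
      intro i _
      by_cases h : (g i).IsSwap
      · simp [h, hd2 _ h]
      · simp [h, hd1 _ (hsq i) (hne i) h]
    rw [Finset.prod_congr rfl h3, Finset.prod_ite, Finset.prod_const, Finset.prod_const,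
      one_pow, mul_one, ← hkcard] at h1
    exact h1
  have hkeven : Even k := by
    by_contra hodd
    rw [Nat.not_even_iff_odd] at hodd
    rw [hodd.neg_one_pow] at hsign
    exact absurd hsign (by decide)
  -- hence k = 0 or k = 2
  have hk02 : k = 0 ∨ k = 2 := by
    obtain ⟨m, hm⟩ := hkeven
    omega
  -- pass to the quotient by the Klein group
  set φ := QuotientGroup.mk' kleinV4 with hφ
  set q : Fin r → Perm (Fin 4) ⧸ kleinV4 := fun i => φ (g i) with hqdef
  have hq1 : ∀ i, q i = 1 ↔ ¬(g i).IsSwap := by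
    intro i
    have hk1 : q i = 1 ↔ g i ∈ kleinV4 := QuotientGroup.eq_one_iff (g i)
    rw [hk1, mem_kleinV4]
    exact hd3 _ (hsq i) (hne i)
  have hqsq : ∀ i, (q i) ^ 2 = 1 := by
    intro i
    rw [hqdef]
    simp only
    rw [← map_pow, hsq i, map_one]
  have htopQ : Subgroup.closure (Set.range q) = ⊤ := by
    have hsurj : Function.Surjective φ := QuotientGroup.mk'_surjective kleinV4
    have h := Subgroup.map_top_of_surjective φ hsurj
    rw [← hgen, MonoidHom.map_closure, ← Set.range_comp] at h
    exact h
  -- cardinalities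
  have hV : Nat.card kleinV4 = 4 := by
    rw [Nat.card_eq_fintype_card]
    decide
  have hS4 : Nat.card (Perm (Fin 4)) = 24 := by
    rw [Nat.card_eq_fintype_card]
    decide
  have hQcard : Nat.card (Perm (Fin 4) ⧸ kleinV4) = 6 := by
    have h := Subgroup.card_eq_card_quotient_mul_card_subgroup kleinV4
    rw [hV, hS4] at h
    omega
  -- the filtered list of nontrivial images
  set l' := (List.ofFn q).filter (fun x => !(x == 1)) with hl'
  have hl'prod : l'.prod = 1 := by
    rw [hl', prod_filter_ne_one']
    have : (List.ofFn q).prod = φ (List.ofFn g).prod := by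
      rw [map_list_prod, List.map_ofFn]; rfl
    rw [this, hprod, map_one]
  have hl'len : l'.length = k := by
    rw [hl', ← List.countP_eq_length_filter, List.ofFn_eq_map, List.countP_map]
    rw [hk, card_subtype_eq_countP]
    apply List.countP_congr
    intro i _
    simp only [Function.comp]
    by_cases h : (g i).IsSwap
    · have : q i ≠ 1 := fun hx => (hq1 i).1 hx h
      simp [h, this]
    · have : q i = 1 := (hq1 i).2 h
      simp [h, this]
  have hcover : ∀ i, q i = 1 ∨ q i ∈ l' := by
    intro i
    by_cases h : q i = 1
    · exact Or.inl h
    · exact Or.inr (List.mem_filter.2 ⟨List.mem_ofFn.2 ⟨i, rfl⟩, by simp [h]⟩)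
  have hmem : ∀ x ∈ l', x ≠ 1 ∧ x ^ 2 = 1 := by
    intro x hx
    obtain ⟨hx1, hx2⟩ := List.mem_filter.1 hx
    obtain ⟨i, hi⟩ := List.mem_ofFn.1 hx1
    refine ⟨by simpa using hx2, hi ▸ hqsq i⟩
  -- find a with range q ⊆ zpowers a
  obtain ⟨a, ha2, hsub⟩ : ∃ a : Perm (Fin 4) ⧸ kleinV4, a ^ 2 = 1 ∧
      Set.range q ⊆ ↑(Subgroup.zpowers a) := by
    rcases hk02 with h0 | h02
    · refine ⟨1, one_pow 2, ?_⟩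
      rintro x ⟨i, rfl⟩
      have : l' = [] := List.length_eq_zero_iff.1 (by rw [hl'len, h0])
      rcases hcover i with h | h
      · rw [h]; exact Subgroup.one_mem _
      · rw [this] at h; exact absurd h List.not_mem_nil
    · obtain ⟨a, b, hab⟩ := List.length_eq_two.1 (by rw [hl'len, h02])
      have hal : a ∈ l' := by rw [hab]; exact List.mem_cons_self
      have hbl : b ∈ l' := by rw [hab]; exact List.mem_cons.2 (Or.inr (List.mem_cons_self))
      obtain ⟨hane, ha2⟩ := hmem a hal
      have hmul : a * b = 1 := by rw [hab] at hl'prod; simpa using hl'prod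
      have hainv : a⁻¹ = a := inv_eq_of_mul_eq_one_right (by rw [← pow_two]; exact ha2)
      have hba : b = a := ((inv_eq_of_mul_eq_one_right hmul).symm).trans hainv
      refine ⟨a, ha2, ?_⟩
      rintro x ⟨i, rfl⟩
      rcases hcover i with h | h
      · rw [h]; exact Subgroup.one_mem _
      · rw [hab] at h
        rcases List.mem_cons.1 h with h' | h'
        · rw [h']; exact Subgroup.mem_zpowers a
        · rcases List.mem_cons.1 h' with h'' | h''
          · rw [h'', hba]; exact Subgroup.mem_zpowers a
          · exact absurd h'' List.not_mem_nil
  -- contradiction with card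
  have hle : (⊤ : Subgroup (Perm (Fin 4) ⧸ kleinV4)) ≤ Subgroup.zpowers a := by
    rw [← htopQ]
    exact (Subgroup.closure_le _).2 hsub
  have hcardle := Subgroup.card_le_of_le hle
  rw [Nat.card_zpowers] at hcardle
  have h6 : Nat.card (⊤ : Subgroup (Perm (Fin 4) ⧸ kleinV4)) = 6 := by
    rw [Subgroup.card_top, hQcard]
  have hord : orderOf a ≤ 2 := orderOf_le_of_pow_eq_one (by norm_num) ha2
  omega
end
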